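/- Under the hypotheses of the previous set identity (equicontinuity in x uniformly over y ∉ N), the intersection over q ∈ ℕ of the closed convex hulls conv f(B_{δ_q}(x_*), B_{r'}(y_*) \ N) equals conv f(x_*, B_{r'}(y_*) \ N). -/

import Mathlib

open Set Metric MeasureTheory Filter

theorem iInter_closedConvexHull_image2_eq (m : ℕ)
    (f : EuclideanSpace ℝ (Fin m) → EuclideanSpace ℝ (Fin m) → EuclideanSpace ℝ (Fin m))
    (xstar ystar : EuclideanSpace ℝ (Fin m)) (r' : ℝ) (hr' : 0 < r')
    (N : Set (EuclideanSpace ℝ (Fin m))) (hN : volume N = 0)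
    (δ ε : ℕ → ℝ) (hδpos : ∀ q, 0 < δ q) (hεpos : ∀ q, 0 < ε q)
    (hδ0 : Tendsto δ atTop (nhds 0)) (hε0 : Tendsto ε atTop (nhds 0))
    (hequi : ∀ q, ∀ y ∉ N,
      (fun x => f x y) '' ball xstar (δ q) ⊆ ball (f xstar y) (ε q))
    (C : ℝ) (hbd : ∀ q, ∀ x ∈ ball xstar (δ q), ∀ y ∈ ball ystar r', ‖f x y‖ ≤ C) :
    (⋂ q : ℕ, closure (convexHull ℝ (Set.image2 f (ball xstar (δ q)) (ball ystar r' \ N)))) =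
      closure (convexHull ℝ (f xstar '' (ball ystar r' \ N))) := by
  set S := ball ystar r' \ N with hS
  set T := convexHull ℝ (f xstar '' S) with hT
  apply subset_antisymm
  · intro z hz
    simp only [mem_iInter] at hz
    -- for each q, z ∈ cthickening (ε q) T
    have key : ∀ q, EMetric.infEdist z T ≤ ENNReal.ofReal (ε q) := by
      intro q
      have h1 : Set.image2 f (ball xstar (δ q)) S ⊆ thickening (ε q) (f xstar '' S) := by
        rintro _ ⟨x, hx, y, hy, rfl⟩
        refine mem_thickening_iff.2 ⟨f xstar y, ⟨y, hy, rfl⟩, ?_⟩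
        have := hequi q y hy.2 ⟨x, hx, rfl⟩
        simpa [dist_comm] using this
      have h2 : thickening (ε q) (f xstar '' S) ⊆ thickening (ε q) T :=
        thickening_subset_of_subset _ (subset_convexHull ℝ _)
      have h3 : Convex ℝ (thickening (ε q) T) := (convex_convexHull ℝ _).thickening _
      have h4 : convexHull ℝ (Set.image2 f (ball xstar (δ q)) S) ⊆ thickening (ε q) T :=
        convexHull_min (h1.trans h2) h3
      have h5 : closure (convexHull ℝ (Set.image2 f (ball xstar (δ q)) S)) ⊆
          cthickening (ε q) T :=
        (closure_mono h4).trans (closure_thickening_subset_cthickening _ _)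
      exact (mem_cthickening_iff).1 (h5 (hz q))
    have h0 : EMetric.infEdist z T = 0 := by
      refine le_antisymm ?_ zero_le
      have : Tendsto (fun q => ENNReal.ofReal (ε q)) atTop (nhds 0) := by
        simpa using (ENNReal.tendsto_ofReal hε0)
      exact ge_of_tendsto' this key
    exact EMetric.mem_closure_iff_infEdist_zero.2 h0
  · apply subset_iInter
    intro q
    refine closure_mono (convexHull_mono ?_)
    exact Set.image_subset_image2_right (mem_ball_self (hδpos q))
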